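/- arXiv:2404.04380 — 2 statements merged into one kernel-verified Lean document; each statement's English description precedes it below -/
import Mathlib

section
/- Let n > 2 and let M = {x^a y^{n-a} : 0 ≤ a ≤ n} be the minimal generating set of the ideal (x,y)^n in the polynomial ring k[x,y]. For every total order ≻ on M there exists a Lyubeznik-critical subset σ ⊆ M with exactly 3 elements. Consequently, every such size-3 Lyubeznik-critical subset has a bridge, so the ideal (x,y)^n is not Lyubeznik. -/
open scoped Classical

noncomputable section

namespace ChauHaMaithani

variable {V : Type*}

/-- The lcm of a finite set of monomials (exponent vectors): pointwise maximum. -/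
def mlcm (σ : Finset (V → ℕ)) : V → ℕ := fun v => σ.sup fun g => g v

/-- `m` is a bridge of `σ`: `m ∈ σ` and dropping `m` does not change the lcm. -/
def IsBridge (σ : Finset (V → ℕ)) (m : V → ℕ) : Prop :=
  m ∈ σ ∧ mlcm (σ.erase m) = mlcm σ

/-- `m` is a gap of `σ`: `m ∉ σ` and adding `m` does not change the lcm. -/
def IsGap (σ : Finset (V → ℕ)) (m : V → ℕ) : Prop :=
  m ∉ σ ∧ mlcm (insert m σ) = mlcm σ

/-- A total order `≻` on monomials is encoded by a ranking function `ord`: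
`m ≻ m'` iff `ord m' < ord m` (injectivity on the generating set is assumed separately).
`m` is a true gap of `σ` if it is a gap and every bridge of `σ ∪ {m}` dominated by `m`
is already a bridge of `σ`. -/
def IsTrueGap (ord : (V → ℕ) → ℕ) (σ : Finset (V → ℕ)) (m : V → ℕ) : Prop :=
  IsGap σ m ∧ ∀ m', IsBridge (insert m σ) m' → ord m' < ord m → IsBridge σ m'

/-- `σ` is type-1: it has a true gap (in `M`) dominating none of its bridges. -/
def Type1 (M : Finset (V → ℕ)) (ord : (V → ℕ) → ℕ) (σ : Finset (V → ℕ)) : Prop :=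
  ∃ m ∈ M, IsTrueGap ord σ m ∧ ∀ b, IsBridge σ b → ¬ ord b < ord m

/-- `σ` is potentially-type-2: it has a bridge dominating none of its true gaps. -/
def PotType2 (M : Finset (V → ℕ)) (ord : (V → ℕ) → ℕ) (σ : Finset (V → ℕ)) : Prop :=
  ∃ b, IsBridge σ b ∧ ∀ m ∈ M, IsTrueGap ord σ m → ¬ ord m < ord b

/-- `b` is the `≻`-smallest bridge of `σ`. -/
def IsSBridge (ord : (V → ℕ) → ℕ) (σ : Finset (V → ℕ)) (b : V → ℕ) : Prop :=
  IsBridge σ b ∧ ∀ b', IsBridge σ b' → ord b ≤ ord b'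

/-- `σ` is type-2. -/
def Type2 (M : Finset (V → ℕ)) (ord : (V → ℕ) → ℕ) (σ : Finset (V → ℕ)) : Prop :=
  PotType2 M ord σ ∧
    ∀ σ' : Finset (V → ℕ), σ' ⊆ M → σ' ≠ σ → PotType2 M ord σ' →
      ∀ b b', IsSBridge ord σ b → IsSBridge ord σ' b' →
        σ'.erase b' = σ.erase b → ord b < ord b'

/-- `M` (the minimal generating set of a monomial ideal) is bridge-friendly w.r.t. `ord`:
every potentially-type-2 subset is type-2. -/
def BridgeFriendlyWrt (M : Finset (V → ℕ)) (ord : (V → ℕ) → ℕ) : Prop :=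
  ∀ σ ⊆ M, PotType2 M ord σ → Type2 M ord σ

/-- `M` is bridge-friendly: bridge-friendly w.r.t. some total order on `M`. -/
def BridgeFriendly (M : Finset (V → ℕ)) : Prop :=
  ∃ ord : (V → ℕ) → ℕ, Set.InjOn ord M ∧ BridgeFriendlyWrt M ord

/-- `σ = {m_1 ≻ ⋯ ≻ m_k} ⊆ M` is Lyubeznik-critical w.r.t. `ord`: there is no `m ∈ M` with
`m_t ≻ m` and `m ∣ lcm(m_1, …, m_t)` for some `1 < t ≤ k`. -/
def LyubCritical (M : Finset (V → ℕ)) (ord : (V → ℕ) → ℕ) (σ : Finset (V → ℕ)) : Prop :=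
  σ ⊆ M ∧ ¬ ∃ m ∈ M, ∃ t ∈ σ, (∃ u ∈ σ, ord t < ord u) ∧ ord m < ord t ∧
      ∀ v, m v ≤ mlcm (σ.filter fun g => ord t ≤ ord g) v

/-- `M` is Lyubeznik: for some total order on `M`, no Lyubeznik-critical subset has a
bridge (equivalently, the associated Lyubeznik resolution is minimal). -/
def IsLyubeznik (M : Finset (V → ℕ)) : Prop :=
  ∃ ord : (V → ℕ) → ℕ, Set.InjOn ord M ∧
    ∀ σ : Finset (V → ℕ), LyubCritical M ord σ → ∀ b, ¬ IsBridge σ b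

/-- The quadratic monomial `xy` attached to an edge `e = {x,y}`. -/
def edgeMon (e : Sym2 V) : V → ℕ := fun v => if v ∈ e then 1 else 0

/-- `mingens(I(G))`: the edge monomials of `G`. -/
def edgeGens [Fintype V] (G : SimpleGraph V) : Finset (V → ℕ) :=
  (Finset.univ.filter fun e : Sym2 V => e ∈ G.edgeSet).image edgeMon

/-- `mingens(I(G)^n)`: the monomials that are products of `n` edges of `G`. -/
def edgePowGens [Fintype V] (G : SimpleGraph V) (n : ℕ) : Finset (V → ℕ) :=
  (Finset.univ.filter fun f : Fin n → Sym2 V => ∀ i, f i ∈ G.edgeSet).image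
    fun f => ∑ i, edgeMon (f i)

/-- A graph is chordal if it contains no induced cycle of length at least 4. -/
def Chordal (G : SimpleGraph V) : Prop :=
  ∀ n, 4 ≤ n → IsEmpty (SimpleGraph.cycleGraph n ↪g G)

/-- `mingens((x,y)^n)`: the monomials `x^a y^{n-a}` for `0 ≤ a ≤ n`, as exponent
vectors on `Fin 2`. -/
def xyPowGens (n : ℕ) : Finset (Fin 2 → ℕ) :=
  (Finset.range (n + 1)).image fun a => fun i : Fin 2 => if i = 0 then a else n - a

/-- The generator `x^a y^{n-a}` as an exponent vector. -/
def gen (n a : ℕ) : Fin 2 → ℕ := fun i => if i = 0 then a else n - a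

lemma gen_zero (n a : ℕ) : gen n a 0 = a := rfl

lemma gen_one (n a : ℕ) : gen n a 1 = n - a := rfl

lemma gen_inj {n a b : ℕ} (h : gen n a = gen n b) : a = b := by
  have := congrFun h 0
  simpa [gen_zero] using this

lemma gen_mem (n a : ℕ) (h : a ≤ n) : gen n a ∈ xyPowGens n := by
  simp only [xyPowGens, Finset.mem_image, Finset.mem_range, Nat.lt_succ_iff]
  exact ⟨a, h, rfl⟩

lemma mem_gen {n : ℕ} {m : Fin 2 → ℕ} (h : m ∈ xyPowGens n) :
    ∃ a ≤ n, m = gen n a := by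
  simp only [xyPowGens, Finset.mem_image, Finset.mem_range, Nat.lt_succ_iff] at h
  obtain ⟨a, ha, rfl⟩ := h
  exact ⟨a, ha, rfl⟩

lemma isBridge_of (σ : Finset (V → ℕ)) (w p q : V → ℕ)
    (hw : w ∈ σ) (hp : p ∈ σ) (hq : q ∈ σ) (hpw : p ≠ w) (hqw : q ≠ w)
    (hcov : ∀ v, w v ≤ p v ∨ w v ≤ q v) : IsBridge σ w := by
  have hp' : p ∈ σ.erase w := by rw [Finset.mem_erase]; exact ⟨hpw, hp⟩
  have hq' : q ∈ σ.erase w := by rw [Finset.mem_erase]; exact ⟨hqw, hq⟩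
  refine ⟨hw, funext fun v => ?_⟩
  show (σ.erase w).sup (fun g => g v) = σ.sup (fun g => g v)
  refine le_antisymm (Finset.sup_mono (Finset.erase_subset _ _))
    (Finset.sup_le fun m hm => ?_)
  by_cases hmw : m = w
  · subst hmw
    rcases hcov v with h | h
    · exact le_trans h (Finset.le_sup (f := fun g => g v) hp')
    · exact le_trans h (Finset.le_sup (f := fun g => g v) hq')
  · have hm' : m ∈ σ.erase w := by rw [Finset.mem_erase]; exact ⟨hmw, hm⟩
    exact Finset.le_sup (f := fun g => g v) hm'

lemma three_bridge (n : ℕ) (σ : Finset (Fin 2 → ℕ)) (hσ : σ ⊆ xyPowGens n)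
    (hcard : σ.card = 3) : ∃ b, IsBridge σ b := by
  obtain ⟨x, y, z, hxy, hxz, hyz, rfl⟩ := Finset.card_eq_three.mp hcard
  have hsub : ∀ m ∈ ({x, y, z} : Finset (Fin 2 → ℕ)), m 1 = n - m 0 := by
    intro m hm
    obtain ⟨a, _, rfl⟩ := mem_gen (hσ hm)
    simp [gen_zero, gen_one]
  have hx : x ∈ ({x, y, z} : Finset (Fin 2 → ℕ)) := by simp
  have hy : y ∈ ({x, y, z} : Finset (Fin 2 → ℕ)) := by simp
  have hz : z ∈ ({x, y, z} : Finset (Fin 2 → ℕ)) := by simp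
  have key : ∀ w p q : Fin 2 → ℕ, w ∈ ({x, y, z} : Finset (Fin 2 → ℕ)) →
      p ∈ ({x, y, z} : Finset (Fin 2 → ℕ)) → q ∈ ({x, y, z} : Finset (Fin 2 → ℕ)) →
      p ≠ w → q ≠ w → w 0 ≤ p 0 → q 0 ≤ w 0 →
      ∃ b, IsBridge ({x, y, z} : Finset (Fin 2 → ℕ)) b := by
    intro w p q hw hp hq hpw hqw h0 h1
    refine ⟨w, isBridge_of _ w p q hw hp hq hpw hqw ?_⟩
    have h1' : w 1 ≤ q 1 := by
      rw [hsub w hw, hsub q hq]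
      exact Nat.sub_le_sub_left h1 n
    exact Fin.forall_fin_two.mpr ⟨Or.inl h0, Or.inr h1'⟩
  rcases le_total (x 0) (y 0) with hab | hab
  · rcases le_total (y 0) (z 0) with hbc | hbc
    · exact key y z x hy hz hx (Ne.symm hyz) hxy hbc hab
    · rcases le_total (x 0) (z 0) with hac | hac
      · exact key z y x hz hy hx hyz hxz hbc hac
      · exact key x y z hx hy hz (Ne.symm hxy) (Ne.symm hxz) hab hac
  · rcases le_total (x 0) (z 0) with hbc | hbc
    · exact key x z y hx hz hy (Ne.symm hxz) (Ne.symm hxy) hbc hab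
    · rcases le_total (y 0) (z 0) with hac | hac
      · exact key z x y hz hx hy hxz hyz hbc hac
      · exact key y x z hy hx hz hxy (Ne.symm hyz) hab hac

lemma exists_critical (n : ℕ) (hn : 2 < n) (ord : (Fin 2 → ℕ) → ℕ)
    (hinj : Set.InjOn ord (xyPowGens n)) :
    ∃ σ, LyubCritical (xyPowGens n) ord σ ∧ σ.card = 3 := by
  have hoinj : ∀ a ≤ n, ∀ b ≤ n, ord (gen n a) = ord (gen n b) → a = b := fun a ha b hb h =>
    gen_inj (hinj (gen_mem n a ha) (gen_mem n b hb) h)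
  obtain ⟨a, ha1, ha2, H⟩ : ∃ a, 1 ≤ a ∧ a + 1 ≤ n ∧
      (ord (gen n (a - 1)) < ord (gen n a) ∨ ord (gen n (a + 1)) < ord (gen n a)) := by
    by_cases h : ord (gen n 0) < ord (gen n 1) ∨ ord (gen n 2) < ord (gen n 1)
    · exact ⟨1, le_refl 1, by omega, h⟩
    · push_neg at h
      have h12 : ord (gen n 1) ≠ ord (gen n 2) := fun he => by
        have := hoinj 1 (by omega) 2 (by omega) he; omega
      refine ⟨2, by omega, by omega, Or.inl ?_⟩
      show ord (gen n 1) < ord (gen n 2)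
      rcases h with ⟨_, h2⟩
      omega
  have hne1 : gen n (a - 1) ≠ gen n a := fun h => by have := gen_inj h; omega
  have hne2 : gen n (a - 1) ≠ gen n (a + 1) := fun h => by have := gen_inj h; omega
  have hne3 : gen n a ≠ gen n (a + 1) := fun h => by have := gen_inj h; omega
  refine ⟨{gen n (a - 1), gen n a, gen n (a + 1)}, ⟨?_, ?_⟩,
    Finset.card_eq_three.mpr ⟨_, _, _, hne1, hne2, hne3, rfl⟩⟩
  · intro m hm
    rcases Finset.mem_insert.mp hm with rfl | hm'
    · exact gen_mem n _ (by omega)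
    rcases Finset.mem_insert.mp hm' with rfl | hm''
    · exact gen_mem n _ (by omega)
    rw [Finset.mem_singleton] at hm''
    subst hm''
    exact gen_mem n _ (by omega)
  rintro ⟨m, hm, t, ht, -, hmt, hdiv⟩
  obtain ⟨c, hc, hmc⟩ := mem_gen hm
  rw [hmc] at hmt hdiv
  have hPel : ∀ p ∈ Finset.filter (fun g => ord t ≤ ord g)
      ({gen n (a - 1), gen n a, gen n (a + 1)} : Finset (Fin 2 → ℕ)),
      (p = gen n (a - 1) ∨ p = gen n a ∨ p = gen n (a + 1)) ∧ ord t ≤ ord p := by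
    intro p hp
    rcases Finset.mem_filter.mp hp with ⟨hpσ, hple⟩
    refine ⟨?_, hple⟩
    rcases Finset.mem_insert.mp hpσ with h' | h'
    · exact Or.inl h'
    rcases Finset.mem_insert.mp h' with h'' | h''
    · exact Or.inr (Or.inl h'')
    · exact Or.inr (Or.inr (Finset.mem_singleton.mp h''))
  have hP0 : ∀ p ∈ Finset.filter (fun g => ord t ≤ ord g)
      ({gen n (a - 1), gen n a, gen n (a + 1)} : Finset (Fin 2 → ℕ)),
      a - 1 ≤ p 0 ∧ p 0 ≤ a + 1 ∧ p 1 = n - p 0 := by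
    intro p hp
    rcases (hPel p hp).1 with h' | h' | h' <;> rw [h'] <;>
      refine ⟨?_, ?_, ?_⟩ <;> simp only [gen_zero, gen_one] <;> omega
  have hd0 : c ≤ (Finset.filter (fun g => ord t ≤ ord g)
      ({gen n (a - 1), gen n a, gen n (a + 1)} : Finset (Fin 2 → ℕ))).sup
      (fun g => g 0) := hdiv 0
  have hd1 : n - c ≤ (Finset.filter (fun g => ord t ≤ ord g)
      ({gen n (a - 1), gen n a, gen n (a + 1)} : Finset (Fin 2 → ℕ))).sup
      (fun g => g 1) := hdiv 1
  have hub0 : (Finset.filter (fun g => ord t ≤ ord g)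
      ({gen n (a - 1), gen n a, gen n (a + 1)} : Finset (Fin 2 → ℕ))).sup
      (fun g => g 0) ≤ a + 1 := Finset.sup_le fun p hp => (hP0 p hp).2.1
  have hub1 : (Finset.filter (fun g => ord t ≤ ord g)
      ({gen n (a - 1), gen n a, gen n (a + 1)} : Finset (Fin 2 → ℕ))).sup
      (fun g => g 1) ≤ n - (a - 1) := Finset.sup_le fun p hp => by
    rw [(hP0 p hp).2.2]
    exact Nat.sub_le_sub_left (hP0 p hp).1 n
  have hcub : c ≤ a + 1 := le_trans hd0 hub0
  have hclb0 := le_trans hd1 hub1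
  clear hub0 hub1
  have hclb : a - 1 ≤ c := by clear hd0 hd1; omega
  have hdisj : c = a - 1 ∨ c = a ∨ c = a + 1 := by clear hd0 hd1; omega
  rcases hdisj with hceq | hceq | hceq
  · -- c = a - 1 : use the y-exponent
    obtain ⟨p, hp, hple⟩ := (Finset.le_sup_iff
      (show (0:ℕ) < n - c by clear hd0 hd1; omega)).mp hd1
    have hple' : n - c ≤ p 1 := hple
    clear hple hd0 hd1
    have h0 := hP0 p hp
    have hge := (hPel p hp).2
    rw [hceq] at hmt
    rcases (hPel p hp).1 with h' | h' | h'
    · rw [h'] at hge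
      omega
    · have hx : p 0 = a := by rw [h']; rfl
      omega
    · have hx : p 0 = a + 1 := by rw [h']; rfl
      omega
  · -- c = a : both neighbours dominate t, contradicting H
    obtain ⟨p, hp, hple⟩ := (Finset.le_sup_iff
      (show (0:ℕ) < c by clear hd0 hd1; omega)).mp hd0
    obtain ⟨q, hq, hqle⟩ := (Finset.le_sup_iff
      (show (0:ℕ) < n - c by clear hd0 hd1; omega)).mp hd1
    have hple' : c ≤ p 0 := hple
    have hqle' : n - c ≤ q 1 := hqle
    clear hple hqle hd0 hd1
    have h0p := hP0 p hp
    have hgep := (hPel p hp).2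
    have h0q := hP0 q hq
    have hgeq := (hPel q hq).2
    rw [hceq] at hmt
    rcases (hPel p hp).1 with h' | h' | h'
    · have hx : p 0 = a - 1 := by rw [h']; rfl
      omega
    · rw [h'] at hgep
      omega
    · rw [h'] at hgep
      rcases (hPel q hq).1 with h'' | h'' | h''
      · rw [h''] at hgeq
        omega
      · rw [h''] at hgeq
        omega
      · have hx : q 1 = n - (a + 1) := by rw [h'']; rfl
        omega
  · -- c = a + 1 : use the x-exponent
    obtain ⟨p, hp, hple⟩ := (Finset.le_sup_iff
      (show (0:ℕ) < c by clear hd0 hd1; omega)).mp hd0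
    have hple' : c ≤ p 0 := hple
    clear hple hd0 hd1
    have h0 := hP0 p hp
    have hge := (hPel p hp).2
    rw [hceq] at hmt
    rcases (hPel p hp).1 with h' | h' | h'
    · have hx : p 0 = a - 1 := by rw [h']; rfl
      omega
    · have hx : p 0 = a := by rw [h']; rfl
      omega
    · rw [h'] at hge
      omega

/-- (From the proof of **Theorem 3.10**.) For `n > 2` and any total order on
`mingens((x,y)^n)` there is a Lyubeznik-critical subset with exactly 3 elements; every
such 3-element Lyubeznik-critical subset has a bridge; consequently `(x,y)^n` is not
Lyubeznik. -/
theorem xyPow_not_Lyubeznik (n : ℕ) (hn : 2 < n) :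
    (∀ ord : (Fin 2 → ℕ) → ℕ, Set.InjOn ord (xyPowGens n) →
      ∃ σ : Finset (Fin 2 → ℕ), LyubCritical (xyPowGens n) ord σ ∧ σ.card = 3) ∧
    (∀ ord : (Fin 2 → ℕ) → ℕ, ∀ σ : Finset (Fin 2 → ℕ),
      LyubCritical (xyPowGens n) ord σ → σ.card = 3 → ∃ b, IsBridge σ b) ∧
    ¬ IsLyubeznik (xyPowGens n) := by
  refine ⟨fun ord hinj => exists_critical n hn ord hinj,
    fun ord σ hcrit hcard => three_bridge n σ hcrit.1 hcard, ?_⟩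
  rintro ⟨ord, hinj, h⟩
  obtain ⟨σ, hcrit, hcard⟩ := exists_critical n hn ord hinj
  obtain ⟨b, hb⟩ := three_bridge n σ hcrit.1 hcard
  exact h σ hcrit b hb

end ChauHaMaithani
end
end

section
/- Let G be a finite simple graph and fix a total order ≻ on the edge set of G, identified with mingens(I(G)). Then I(G) is not bridge-friendly with respect to ≻ if and only if there exist a type-1 subset τ of the edge set and edges m_1 ≻ m_2 ≻ m_3 such that: m_1 and m_2 are true gaps of τ, neither of which dominates any bridge of τ; the sets τ∪{m_1} and τ∪{m_2} are potentially-type-2; and m_3 ∈ τ is a bridge of τ∪{m_1,m_2}. Moreover, in this situation, writing m_3 = yz for vertices y and z, either m_1 and m_3 are the only edges in τ∪{m_1,m_2} containing y and m_2 and m_3 are the only edges in τ∪{m_1,m_2} containing z, or vice versa (with the roles of m_1 and m_2 exchanged). -/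
open scoped Classical

noncomputable section

namespace ChauHaMaithani

variable {V : Type*}

/-- Vertex type of the graph `L(a,b,c)`: `Sum.inl 0` is `x`, `Sum.inl 1` is `y`,
and the remaining summands are the leaves `x_i`, the leaves `y_j`, and the
triangle tips `z_k`. -/
abbrev LV (a b c : ℕ) := Fin 2 ⊕ (Fin a ⊕ Fin b ⊕ Fin c)

/-- The graph `L(a,b,c)`: `c` triangles glued along the common edge `{x,y}`, with
`a` leaves attached to `x` and `b` leaves attached to `y`. -/
def LGraph (a b c : ℕ) : SimpleGraph (LV a b c) :=
  SimpleGraph.fromRel fun u v =>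
    (u = Sum.inl 0 ∧ v = Sum.inl 1) ∨
    (∃ i, u = Sum.inl 0 ∧ v = Sum.inr (Sum.inl i)) ∨
    (∃ j, u = Sum.inl 1 ∧ v = Sum.inr (Sum.inr (Sum.inl j))) ∨
    (∃ k, (u = Sum.inl 0 ∨ u = Sum.inl 1) ∧ v = Sum.inr (Sum.inr (Sum.inr k)))

/-- The graph `BF(T,w)`: attach `w(e)` new triangles along each edge `e` of `T`. -/
def BFGraph {VT : Type} (T : SimpleGraph VT) (w : T.edgeSet → ℕ) :
    SimpleGraph (VT ⊕ (Σ e : T.edgeSet, Fin (w e))) :=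
  SimpleGraph.fromRel fun u v =>
    (∃ a b, u = Sum.inl a ∧ v = Sum.inl b ∧ T.Adj a b) ∨
    (∃ (a : VT) (e : T.edgeSet) (i : Fin (w e)), u = Sum.inl a ∧ v = Sum.inr ⟨e, i⟩ ∧
      a ∈ (e : Sym2 VT))

/-- The kite graph: the diamond (`K₄` minus the edge `{2,3}`) together with a pendant
vertex `4` attached to the degree-two vertex `2`. -/
def kite : SimpleGraph (Fin 5) :=
  SimpleGraph.fromEdgeSet {s(0,1), s(0,2), s(0,3), s(1,2), s(1,3), s(2,4)}

/-- The gem graph: the path `0-1-2-3` together with a vertex `4` adjacent to all of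
`0,1,2,3`. -/
def gem : SimpleGraph (Fin 5) :=
  SimpleGraph.fromEdgeSet {s(0,1), s(1,2), s(2,3), s(0,4), s(1,4), s(2,4), s(3,4)}

/-- The tadpole graph: the triangle `0,1,2` with a path `0-3-4` of length 2 attached. -/
def tadpole : SimpleGraph (Fin 5) :=
  SimpleGraph.fromEdgeSet {s(0,1), s(1,2), s(0,2), s(0,3), s(3,4)}

/-- The butterfly graph: two triangles `0,1,2` and `0,3,4` sharing the vertex `0`. -/
def butterfly : SimpleGraph (Fin 5) :=
  SimpleGraph.fromEdgeSet {s(0,1), s(1,2), s(0,2), s(0,3), s(3,4), s(0,4)}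

/-- The net graph: the triangle `0,1,2` with pendant vertices `3,4,5` attached to
`0,1,2` respectively. -/
def net : SimpleGraph (Fin 6) :=
  SimpleGraph.fromEdgeSet {s(0,1), s(1,2), s(0,2), s(0,3), s(1,4), s(2,5)}





section Aux

variable {V : Type*}

lemma decEq_eq {α : Type*} (i1 i2 : DecidableEq α) : i1 = i2 :=
  funext fun a => funext fun b => Subsingleton.elim _ _

/-- `Finset.erase` with a pinned decidability instance, used as a normal form. -/
def eP {α : Type*} (s : Finset α) (a : α) : Finset α :=
  @Finset.erase _ (fun a b => Classical.propDecidable (a = b)) s a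

/-- `insert` with a pinned decidability instance, used as a normal form. -/
def iP {α : Type*} (a : α) (s : Finset α) : Finset α :=
  @insert _ _ (@Finset.instInsert _ (fun a b => Classical.propDecidable (a = b))) a s

lemma erP {α : Type*} {i : DecidableEq α} (s : Finset α) (a : α) :
    @Finset.erase _ i s a = eP s a := by
  unfold eP
  rw [decEq_eq i (fun a b => Classical.propDecidable (a = b))]

lemma insP {α : Type*} {i : DecidableEq α} (a : α) (s : Finset α) :
    @insert _ _ (@Finset.instInsert _ i) a s = iP a s := by
  unfold iP
  rw [decEq_eq i (fun a b => Classical.propDecidable (a = b))]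

lemma mem_iP {α : Type*} {a b : α} {s : Finset α} : a ∈ iP b s ↔ a = b ∨ a ∈ s :=
  Finset.mem_insert

lemma mem_eP {α : Type*} {a b : α} {s : Finset α} : a ∈ eP s b ↔ a ≠ b ∧ a ∈ s :=
  Finset.mem_erase

lemma notMem_eP {α : Type*} (s : Finset α) (a : α) : a ∉ eP s a :=
  Finset.notMem_erase a s

lemma eP_iP {α : Type*} {a : α} {s : Finset α} (h : a ∉ s) : eP (iP a s) a = s :=
  Finset.erase_insert h

lemma iP_eP {α : Type*} {a : α} {s : Finset α} (h : a ∈ s) : iP a (eP s a) = s :=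
  Finset.insert_erase h

lemma eP_iP_ne {α : Type*} {a b : α} (s : Finset α) (h : a ≠ b) :
    eP (iP a s) b = iP a (eP s b) :=
  Finset.erase_insert_of_ne h

lemma iP_comm {α : Type*} (a b : α) (s : Finset α) : iP a (iP b s) = iP b (iP a s) :=
  Finset.insert_comm a b s

lemma eP_subset {α : Type*} (s : Finset α) (a : α) : eP s a ⊆ s :=
  Finset.erase_subset a s

lemma iP_subset {α : Type*} {a : α} {s t : Finset α} (h1 : a ∈ t) (h2 : s ⊆ t) :
    iP a s ⊆ t :=
  Finset.insert_subset h1 h2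

lemma mem_iP_self {α : Type*} (a : α) (s : Finset α) : a ∈ iP a s :=
  Finset.mem_insert_self a s

lemma mem_iP_of_mem {α : Type*} {a b : α} {s : Finset α} (h : a ∈ s) : a ∈ iP b s :=
  Finset.mem_insert_of_mem h

lemma mlcm_iP (m : V → ℕ) (σ : Finset (V → ℕ)) (v : V) :
    mlcm (iP m σ) v = max (m v) (mlcm σ v) := by
  simp [iP, mlcm]

lemma mlcm_mono {s t : Finset (V → ℕ)} (h : s ⊆ t) (v : V) : mlcm s v ≤ mlcm t v :=
  Finset.sup_mono h

lemma le_mlcm {s : Finset (V → ℕ)} {g : V → ℕ} (h : g ∈ s) (v : V) : g v ≤ mlcm s v :=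
  Finset.le_sup (f := fun g => g v) h

lemma exists_of_not_bridge_lcm {σ : Finset (V → ℕ)} {m : V → ℕ}
    (h : mlcm (eP σ m) ≠ mlcm σ) :
    ∃ v, mlcm (eP σ m) v < m v := by
  by_contra hc
  push_neg at hc
  apply h
  funext v
  refine le_antisymm (mlcm_mono (eP_subset _ _) v) (Finset.sup_le fun g hg => ?_)
  by_cases hgm : g = m
  · subst hgm; exact hc v
  · exact le_mlcm (mem_eP.mpr ⟨hgm, hg⟩) v

lemma mem_edgeGens_iff [Fintype V] {G : SimpleGraph V} {m : V → ℕ} (h : m ∈ edgeGens G) :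
    ∃ y z, G.Adj y z ∧ m = edgeMon s(y, z) := by
  simp only [edgeGens, Finset.mem_image, Finset.mem_filter, Finset.mem_univ, true_and] at h
  obtain ⟨e, he, rfl⟩ := h
  induction e using Sym2.ind with
  | _ y z => exact ⟨y, z, he, rfl⟩

lemma edgeMon_le_one (e : Sym2 V) (v : V) : edgeMon e v ≤ 1 := by
  unfold edgeMon; split <;> simp

lemma edgeMon_pos {y z v : V} (h : 0 < edgeMon s(y, z) v) : v = y ∨ v = z := by
  by_contra hc
  push_neg at hc
  simp [edgeMon, Sym2.mem_iff, hc.1, hc.2] at h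

lemma bridge_insert {τ : Finset (V → ℕ)} {b m : V → ℕ}
    (hb : IsBridge τ b) (hm : m ∉ τ) :
    IsBridge (iP m τ) b := by
  have hbm : m ≠ b := fun h => hm (h ▸ hb.1)
  have hb2 := hb.2
  simp only [erP] at hb2
  rw [IsBridge]
  simp only [erP]
  refine ⟨mem_iP_of_mem hb.1, ?_⟩
  rw [eP_iP_ne _ hbm]
  funext v
  rw [mlcm_iP, mlcm_iP, congrFun hb2 v]

end Aux

/-- **Proposition 4.1.** For a graph `G` with a total order on its edge monomials,
`I(G)` is not bridge-friendly w.r.t. the order iff there exist a type-1 set `τ` and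
edges `m₁ ≻ m₂ ≻ m₃` as in Lemma 2.8 with `m₃ ∈ τ` a bridge of `τ ∪ {m₁, m₂}`, and
moreover, writing `m₃ = yz`, either `m₁, m₃` are the only edges of `τ ∪ {m₁, m₂}`
containing `y` and `m₂, m₃` the only ones containing `z`, or vice versa. -/
theorem edgeIdeal_not_bridgeFriendly_iff {V : Type} [Fintype V] (G : SimpleGraph V)
    (ord : (V → ℕ) → ℕ) (hinj : Set.InjOn ord (edgeGens G)) :
    ¬ BridgeFriendlyWrt (edgeGens G) ord ↔
      ∃ τ ⊆ edgeGens G, ∃ m₁ ∈ edgeGens G, ∃ m₂ ∈ edgeGens G, ∃ m₃ ∈ τ,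
        Type1 (edgeGens G) ord τ ∧
        ord m₂ < ord m₁ ∧ ord m₃ < ord m₂ ∧
        IsTrueGap ord τ m₁ ∧ IsTrueGap ord τ m₂ ∧
        (∀ b, IsBridge τ b → ¬ ord b < ord m₁) ∧
        (∀ b, IsBridge τ b → ¬ ord b < ord m₂) ∧
        PotType2 (edgeGens G) ord (insert m₁ τ) ∧
        PotType2 (edgeGens G) ord (insert m₂ τ) ∧
        IsBridge (insert m₁ (insert m₂ τ)) m₃ ∧
        (∃ y z : V, G.Adj y z ∧ m₃ = edgeMon s(y, z) ∧
          (((∀ g ∈ insert m₁ (insert m₂ τ), g y ≠ 0 → g = m₁ ∨ g = m₃) ∧ m₁ y ≠ 0 ∧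
            (∀ g ∈ insert m₁ (insert m₂ τ), g z ≠ 0 → g = m₂ ∨ g = m₃) ∧ m₂ z ≠ 0) ∨
           ((∀ g ∈ insert m₁ (insert m₂ τ), g y ≠ 0 → g = m₂ ∨ g = m₃) ∧ m₂ y ≠ 0 ∧
            (∀ g ∈ insert m₁ (insert m₂ τ), g z ≠ 0 → g = m₁ ∨ g = m₃) ∧ m₁ z ≠ 0))) := by
  simp only [insP, erP]
  constructor
  · -- forward direction
    intro hnBF
    simp only [BridgeFriendlyWrt] at hnBF
    push_neg at hnBF
    obtain ⟨σ, hσM, hpt2, hnt2⟩ := hnBF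
    rw [Type2, not_and] at hnt2
    have hnt2' := hnt2 hpt2
    push_neg at hnt2'
    obtain ⟨σ', hσ'M, hne, hpt2', m₁, m₂, hsb1, hsb2, herase, hle⟩ := hnt2'
    simp only [erP] at herase
    have hm1σ : m₁ ∈ σ := hsb1.1.1
    have hm2σ' : m₂ ∈ σ' := hsb2.1.1
    have hlcm1 := hsb1.1.2
    simp only [erP] at hlcm1
    have hlcm2 := hsb2.1.2
    simp only [erP] at hlcm2
    set τ := eP σ m₁ with hτdef
    have hτM : τ ⊆ edgeGens G := (eP_subset σ m₁).trans hσM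
    have hm1M : m₁ ∈ edgeGens G := hσM hm1σ
    have hm2M : m₂ ∈ edgeGens G := hσ'M hm2σ'
    have hσ : σ = iP m₁ τ := (iP_eP hm1σ).symm
    have hm1τ : m₁ ∉ τ := notMem_eP σ m₁
    have hm2τ : m₂ ∉ τ := by rw [← herase]; exact notMem_eP σ' m₂
    have hσ' : σ' = iP m₂ τ := by rw [← herase]; exact (iP_eP hm2σ').symm
    have hm12 : m₁ ≠ m₂ := by
      intro h
      apply hne
      rw [hσ', hσ, ← h]
    have h21 : ord m₂ < ord m₁ := by
      rcases lt_or_eq_of_le hle with h | h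
      · exact h
      · exact absurd (hinj hm2M hm1M h) (Ne.symm hm12)
    have hlcmτσ : mlcm τ = mlcm σ := hlcm1
    have hlcmτσ' : mlcm τ = mlcm σ' := by rw [← herase]; exact hlcm2
    have hgap1 : IsGap τ m₁ := by
      rw [IsGap]
      simp only [insP]
      exact ⟨hm1τ, by rw [← hσ]; exact hlcmτσ.symm⟩
    have hgap2 : IsGap τ m₂ := by
      rw [IsGap]
      simp only [insP]
      exact ⟨hm2τ, by rw [← hσ']; exact hlcmτσ'.symm⟩
    have htg1 : IsTrueGap ord τ m₁ := by
      rw [IsTrueGap]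
      simp only [insP]
      exact ⟨hgap1, fun m' hb hlt =>
        absurd hlt (not_lt.mpr (hsb1.2 m' (by rwa [← hσ] at hb)))⟩
    have htg2 : IsTrueGap ord τ m₂ := by
      rw [IsTrueGap]
      simp only [insP]
      exact ⟨hgap2, fun m' hb hlt =>
        absurd hlt (not_lt.mpr (hsb2.2 m' (by rwa [← hσ'] at hb)))⟩
    have hnb1 : ∀ b, IsBridge τ b → ¬ ord b < ord m₁ := by
      intro b hb
      have hbσ : IsBridge σ b := by rw [hσ]; exact bridge_insert hb hm1τ
      exact not_lt.mpr (hsb1.2 b hbσ)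
    have hnb2 : ∀ b, IsBridge τ b → ¬ ord b < ord m₂ := by
      intro b hb
      have hbσ' : IsBridge σ' b := by rw [hσ']; exact bridge_insert hb hm2τ
      exact not_lt.mpr (hsb2.2 b hbσ')
    have htype1 : Type1 (edgeGens G) ord τ := ⟨m₂, hm2M, htg2, hnb2⟩
    have hm2le : ∀ v, m₂ v ≤ mlcm τ v := by
      intro v
      have h1 := congrFun hlcmτσ' v
      have h2 : mlcm σ' v = max (m₂ v) (mlcm τ v) := by rw [hσ']; exact mlcm_iP _ _ _
      omega
    have hgap2σ : IsGap σ m₂ := by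
      rw [IsGap]
      simp only [insP]
      refine ⟨?_, ?_⟩
      · rw [hσ]
        intro hmem
        rcases mem_iP.mp hmem with h | h
        · exact hm12 h.symm
        · exact hm2τ h
      · funext v
        rw [mlcm_iP]
        have h3 := hm2le v
        have h4 := congrFun hlcmτσ v
        omega
    have hntg : ¬ IsTrueGap ord σ m₂ := by
      intro htg
      obtain ⟨β, hβbr, hβ⟩ := hpt2
      have h1 := hβ m₂ hm2M htg
      have h2 := hsb1.2 β hβbr
      omega
    rw [IsTrueGap, not_and] at hntg
    have hntg' := hntg hgap2σ
    push_neg at hntg'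
    obtain ⟨m₃, hbr3, h32, hnbr3⟩ := hntg'
    simp only [insP] at hbr3
    have hΓ : iP m₂ σ = iP m₁ (iP m₂ τ) := by rw [hσ]; exact iP_comm _ _ _
    have hΓ' : iP m₂ σ = iP m₁ σ' := by rw [hΓ, hσ']
    have hm32 : m₃ ≠ m₂ := fun h => by rw [h] at h32; omega
    have hm31 : m₃ ≠ m₁ := fun h => by rw [h] at h32; omega
    have hm3σ : m₃ ∈ σ := by
      rcases mem_iP.mp hbr3.1 with h | h
      · exact absurd h hm32
      · exact h
    have hm3τ : m₃ ∈ τ := by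
      have h := hm3σ
      rw [hσ] at h
      rcases mem_iP.mp h with h' | h'
      · exact absurd h' hm31
      · exact h'
    have hm3M : m₃ ∈ edgeGens G := hτM hm3τ
    obtain ⟨y, z, hyz, hm3eq⟩ := mem_edgeGens_iff hm3M
    rw [IsBridge, not_and] at hnbr3
    have hlcm3 := hnbr3 hm3σ
    simp only [erP] at hlcm3
    obtain ⟨v₁, hv₁⟩ := exists_of_not_bridge_lcm hlcm3
    have hm3v₁ : m₃ v₁ = 1 ∧ mlcm (eP σ m₃) v₁ = 0 := by
      have := edgeMon_le_one s(y, z) v₁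
      rw [← hm3eq] at this
      omega
    have hv₁yz : v₁ = y ∨ v₁ = z := edgeMon_pos (v := v₁) (by rw [← hm3eq]; omega)
    have hzero1 : ∀ g ∈ eP σ m₃, g v₁ = 0 := by
      intro g hg
      have := le_mlcm hg v₁
      omega
    have hnbr3' : ¬ IsBridge σ' m₃ := by
      intro h
      have := hsb2.2 m₃ h
      omega
    have hm3σ' : m₃ ∈ σ' := by rw [hσ']; exact mem_iP_of_mem hm3τ
    rw [IsBridge, not_and] at hnbr3'
    have hlcm3' := hnbr3' hm3σ'
    simp only [erP] at hlcm3'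
    obtain ⟨v₂, hv₂⟩ := exists_of_not_bridge_lcm hlcm3'
    have hm3v₂ : m₃ v₂ = 1 ∧ mlcm (eP σ' m₃) v₂ = 0 := by
      have := edgeMon_le_one s(y, z) v₂
      rw [← hm3eq] at this
      omega
    have hv₂yz : v₂ = y ∨ v₂ = z := edgeMon_pos (v := v₂) (by rw [← hm3eq]; omega)
    have hzero2 : ∀ g ∈ eP σ' m₃, g v₂ = 0 := by
      intro g hg
      have := le_mlcm hg v₂
      omega
    have hb2 := hbr3.2
    simp only [erP] at hb2
    have hm2v₁ : 1 ≤ m₂ v₁ := by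
      have hb2a := hb2
      rw [eP_iP_ne _ (Ne.symm hm32)] at hb2a
      have h6 := congrFun hb2a v₁
      have h7 := mlcm_iP m₂ (eP σ m₃) v₁
      have h5 := le_mlcm hbr3.1 v₁
      have h9 := hm3v₁
      omega
    have hm1v₂ : 1 ≤ m₁ v₂ := by
      have hb2b := hb2
      rw [hΓ'] at hb2b
      rw [eP_iP_ne _ (Ne.symm hm31)] at hb2b
      have h6 := congrFun hb2b v₂
      have h7 := mlcm_iP m₁ (eP σ' m₃) v₂
      have hmem : m₃ ∈ iP m₁ σ' := by rw [← hΓ']; exact hbr3.1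
      have h5 := le_mlcm hmem v₂
      have h9 := hm3v₂
      omega
    have hv₁₂ : v₁ ≠ v₂ := by
      intro h
      have hm2mem : m₂ ∈ eP σ' m₃ := mem_eP.mpr ⟨Ne.symm hm32, hm2σ'⟩
      have := hzero2 m₂ hm2mem
      rw [← h] at this
      omega
    refine ⟨τ, hτM, m₁, hm1M, m₂, hm2M, m₃, hm3τ, htype1, h21, h32, htg1, htg2,
      hnb1, hnb2, by rwa [← hσ], by rwa [← hσ'], by rw [hΓ] at hbr3; exact hbr3,
      y, z, hyz, hm3eq, ?_⟩
    have honlyy : ∀ w, (∀ g ∈ eP σ' m₃, g w = 0) →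
        (∀ g ∈ iP m₁ (iP m₂ τ), g w ≠ 0 → g = m₁ ∨ g = m₃) := by
      intro w hzero g hg hgw
      rw [← hΓ, hΓ'] at hg
      rcases mem_iP.mp hg with h | h
      · exact Or.inl h
      · by_cases h3 : g = m₃
        · exact Or.inr h3
        · exact absurd (hzero g (mem_eP.mpr ⟨h3, h⟩)) hgw
    have honlyz : ∀ w, (∀ g ∈ eP σ m₃, g w = 0) →
        (∀ g ∈ iP m₁ (iP m₂ τ), g w ≠ 0 → g = m₂ ∨ g = m₃) := by
      intro w hzero g hg hgw
      rw [← hΓ] at hg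
      rcases mem_iP.mp hg with h | h
      · exact Or.inl h
      · by_cases h3 : g = m₃
        · exact Or.inr h3
        · exact absurd (hzero g (mem_eP.mpr ⟨h3, h⟩)) hgw
    rcases hv₂yz with h2y | h2z
    · have h1z : v₁ = z := by
        rcases hv₁yz with h | h
        · exact absurd (h.trans h2y.symm) hv₁₂
        · exact h
      rw [h2y] at hzero2 hm1v₂
      rw [h1z] at hzero1 hm2v₁
      exact Or.inl ⟨honlyy y hzero2, by omega, honlyz z hzero1, by omega⟩
    · have h1y : v₁ = y := by
        rcases hv₁yz with h | h
        · exact h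
        · exact absurd (h.trans h2z.symm) hv₁₂
      rw [h2z] at hzero2 hm1v₂
      rw [h1y] at hzero1 hm2v₁
      exact Or.inr ⟨honlyz y hzero1, by omega, honlyy z hzero2, by omega⟩
  · -- backward direction
    rintro ⟨τ, hτM, m₁, hm1M, m₂, hm2M, m₃, hm3τ, htype1, h21, h32, htg1, htg2,
      hnb1, hnb2, hpt1, hpt2, hbr3, hvert⟩ hBF
    rw [IsTrueGap, IsGap] at htg1 htg2
    simp only [insP] at htg1 htg2
    have hm1τ : m₁ ∉ τ := htg1.1.1
    have hm2τ : m₂ ∉ τ := htg2.1.1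
    have hσM : iP m₁ τ ⊆ edgeGens G := iP_subset hm1M hτM
    have hσ'M : iP m₂ τ ⊆ edgeGens G := iP_subset hm2M hτM
    have hT2 := hBF _ hσM hpt1
    have sb1 : IsSBridge ord (iP m₁ τ) m₁ := by
      refine ⟨?_, ?_⟩
      · rw [IsBridge]
        simp only [erP]
        exact ⟨mem_iP_self _ _, by rw [eP_iP hm1τ]; exact htg1.1.2.symm⟩
      · intro b' hb'
        by_contra h
        push_neg at h
        exact hnb1 b' (htg1.2 b' hb' h) h
    have sb2 : IsSBridge ord (iP m₂ τ) m₂ := by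
      refine ⟨?_, ?_⟩
      · rw [IsBridge]
        simp only [erP]
        exact ⟨mem_iP_self _ _, by rw [eP_iP hm2τ]; exact htg2.1.2.symm⟩
      · intro b' hb'
        by_contra h
        push_neg at h
        exact hnb2 b' (htg2.2 b' hb' h) h
    have hne : iP m₂ τ ≠ iP m₁ τ := by
      intro h
      have hmem := mem_iP_self m₂ τ
      rw [h] at hmem
      rcases mem_iP.mp hmem with h' | h'
      · rw [h'] at h21; omega
      · exact hm2τ h'
    have hfin := hT2.2 (iP m₂ τ) hσ'M hne hpt2 m₁ m₂ sb1 sb2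
      (by simp only [erP]; rw [eP_iP hm2τ, eP_iP hm1τ])
    omega


end ChauHaMaithani
end
end
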